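/- (Bivariate normal: boundary regime of the joint tail.) Let Z₁, Z₂ be independent standard normal random variables, let ρ ∈ (0,1), and set X = Z₁ and Y = ρZ₁ + (1−ρ²)^{1/2} Z₂, so that (X,Y) is bivariate standard normal with correlation ρ. Let β, γ > 0 and let x_β(n), x_γ(n) satisfy Φ(x_β(n)) = 1 − n^{−β} and Φ(x_γ(n)) = 1 − n^{−γ}, where Φ is the standard normal distribution function. If β < ρ²γ, then P(X > x_β(n), Y > x_γ(n)) / n^{−γ} → 1 as n → ∞; if β = ρ²γ, then P(X > x_β(n), Y > x_γ(n)) / n^{−γ} → 1/2 as n → ∞. -/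

import Mathlib

open MeasureTheory Filter ProbabilityTheory

/-- The standard normal cumulative distribution function. -/
noncomputable def stdNormalCDF (x : ℝ) : ℝ :=
  ∫ u in Set.Iic x, (Real.sqrt (2 * Real.pi))⁻¹ * Real.exp (-u ^ 2 / 2)

section Helpers
open Set


/-- standard normal density -/
noncomputable def phiR (x : ℝ) : ℝ := (Real.sqrt (2 * Real.pi))⁻¹ * Real.exp (-x ^ 2 / 2)

lemma phiR_pos (x : ℝ) : 0 < phiR x := by
  have h2π : 0 < 2 * Real.pi := by positivity
  exact mul_pos (inv_pos.mpr (Real.sqrt_pos.mpr h2π)) (Real.exp_pos _)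

lemma continuous_phiR : Continuous phiR := by
  unfold phiR; fun_prop

lemma integrable_phiR : Integrable phiR := by
  have : Integrable (fun x : ℝ => Real.exp (-(1/2 : ℝ) * x ^ 2)) := integrable_exp_neg_mul_sq (by norm_num)
  have h := this.const_mul (Real.sqrt (2 * Real.pi))⁻¹
  refine h.congr (Eventually.of_forall fun x => ?_)
  unfold phiR; ring_nf

lemma integral_phiR : ∫ x, phiR x = 1 := by
  have h : ∫ x : ℝ, Real.exp (-(1/2 : ℝ) * x ^ 2) = Real.sqrt (Real.pi / (1/2)) :=
    integral_gaussian (1/2)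
  have h2 : ∫ x : ℝ, phiR x = (Real.sqrt (2 * Real.pi))⁻¹ * ∫ x : ℝ, Real.exp (-(1/2:ℝ) * x ^ 2) := by
    rw [← integral_const_mul]
    refine integral_congr_ae (Eventually.of_forall fun x => ?_)
    unfold phiR; ring_nf
  rw [h2, h]
  have : Real.pi / (1/2 : ℝ) = 2 * Real.pi := by ring
  rw [this]
  have hpos : (0:ℝ) < 2 * Real.pi := by positivity
  field_simp

/-- upper tail -/
noncomputable def PsiR (x : ℝ) : ℝ := ∫ u in Set.Ioi x, phiR u

lemma stdNormalCDF_eq (x : ℝ) : stdNormalCDF x = ∫ u in Set.Iic x, phiR u := rfl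

lemma stdNormalCDF_add_PsiR (x : ℝ) : stdNormalCDF x + PsiR x = 1 := by
  rw [stdNormalCDF_eq, PsiR]
  have := integral_add_compl (μ := volume) (measurableSet_Iic (a := x)) integrable_phiR
  rw [compl_Iic] at this
  rw [this, integral_phiR]

lemma PsiR_nonneg (x : ℝ) : 0 ≤ PsiR x :=
  setIntegral_nonneg measurableSet_Ioi fun u _ => (phiR_pos u).le

lemma PsiR_pos (x : ℝ) : 0 < PsiR x := by
  rw [PsiR]
  refine (setIntegral_pos_iff_support_of_nonneg_ae ?_ ?_).mpr ?_
  · exact Eventually.of_forall fun u => (phiR_pos u).le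
  · exact integrable_phiR.integrableOn
  · have : (Function.support phiR) = Set.univ := by
      ext u; simp [Function.support, (phiR_pos u).ne']
    rw [this]
    simp [Set.inter_univ]

lemma PsiR_anti : Antitone PsiR := by
  intro x y hxy
  rw [PsiR, PsiR]
  refine setIntegral_mono_set integrable_phiR.integrableOn
    (Eventually.of_forall fun u => (phiR_pos u).le)
    (HasSubset.Subset.eventuallyLE (Ioi_subset_Ioi hxy))

lemma PsiR_le_one (x : ℝ) : PsiR x ≤ 1 := by
  have h := stdNormalCDF_add_PsiR x
  have h0 : 0 ≤ stdNormalCDF x := setIntegral_nonneg measurableSet_Iic fun u _ => (phiR_pos u).le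
  linarith

lemma measurable_PsiR : Measurable PsiR := PsiR_anti.measurable


lemma hasDerivAt_neg_phiR (u : ℝ) : HasDerivAt (fun v => -phiR v) (u * phiR u) u := by
  have h1 : HasDerivAt (fun v : ℝ => -v ^ 2 / 2) (-u) u := by
    have := ((hasDerivAt_pow 2 u).neg).div_const 2
    simpa using this.congr_deriv (by push_cast; ring)
  have h2 : HasDerivAt (fun v : ℝ => Real.exp (-v ^ 2 / 2)) (Real.exp (-u^2/2) * (-u)) u :=
    (Real.hasDerivAt_exp _).comp u h1
  have h3 := (h2.const_mul (Real.sqrt (2 * Real.pi))⁻¹).neg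
  refine h3.congr_deriv ?_
  unfold phiR; ring

lemma tendsto_phiR_atTop : Tendsto phiR atTop (nhds 0) := by
  have h1 : Tendsto (fun x : ℝ => -x ^ 2 / 2) atTop atBot := by
    apply Tendsto.atBot_div_const (by norm_num)
    exact tendsto_neg_atTop_atBot.comp (tendsto_pow_atTop two_ne_zero)
  have h2 := Real.tendsto_exp_atBot.comp h1
  have h3 := h2.const_mul (Real.sqrt (2 * Real.pi))⁻¹
  have h4 : Tendsto (fun x : ℝ => (Real.sqrt (2 * Real.pi))⁻¹ * Real.exp (-x^2/2)) atTop (nhds 0) := by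
    simpa only [mul_zero, Function.comp_def] using h3
  exact h4.congr fun x => rfl

lemma integrableOn_id_mul_phiR (x : ℝ) : IntegrableOn (fun u => u * phiR u) (Ioi x) := by
  have h : Integrable (fun u : ℝ => u ^ (1:ℝ) * Real.exp (-(1/2:ℝ) * u ^ 2)) :=
    integrable_rpow_mul_exp_neg_mul_sq (by norm_num) (by norm_num)
  have h2 : Integrable (fun u : ℝ => u * Real.exp (-(1/2:ℝ) * u ^ 2)) := by
    refine h.congr (Eventually.of_forall fun u => by simp [Real.rpow_one])
  have h3 := (h2.const_mul (Real.sqrt (2 * Real.pi))⁻¹)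
  refine (h3.congr (Eventually.of_forall fun u => ?_)).integrableOn
  unfold phiR; ring_nf

lemma integral_id_mul_phiR (x : ℝ) : ∫ u in Ioi x, u * phiR u = phiR x := by
  have := integral_Ioi_of_hasDerivAt_of_tendsto' (f := fun v => -phiR v)
    (f' := fun u => u * phiR u) (a := x) (m := 0)
    (fun u _ => hasDerivAt_neg_phiR u) (integrableOn_id_mul_phiR x)
    (by simpa using tendsto_phiR_atTop.neg)
  simpa using this

lemma mills_upper {x : ℝ} (hx : 0 < x) : PsiR x ≤ phiR x / x := by
  have hmono : ∫ u in Ioi x, phiR u ≤ ∫ u in Ioi x, (u / x) * phiR u := by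
    refine setIntegral_mono_on integrable_phiR.integrableOn ?_ measurableSet_Ioi ?_
    · exact ((integrableOn_id_mul_phiR x).div_const x).congr
        (Eventually.of_forall fun u => by ring)
    · intro u hu
      have h1 : (1:ℝ) ≤ u / x := (one_le_div hx).mpr (le_of_lt hu)
      nlinarith [phiR_pos u]
  have h2 : ∫ u in Ioi x, (u / x) * phiR u = (∫ u in Ioi x, u * phiR u) / x := by
    rw [← integral_div]
    exact setIntegral_congr_fun measurableSet_Ioi fun u _ => by ring
  calc PsiR x ≤ ∫ u in Ioi x, (u / x) * phiR u := hmono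
    _ = phiR x / x := by rw [h2, integral_id_mul_phiR]

lemma hasDerivAt_G (u : ℝ) (hu : u ≠ 0) :
    HasDerivAt (fun v => -(phiR v * (1/v - 1/v^3))) (phiR u * (1 - 3/u^4)) u := by
  have h1 : HasDerivAt (fun v : ℝ => 1/v - 1/v^3) (-1/u^2 + 3/u^4) u := by
    have ha : HasDerivAt (fun v : ℝ => v⁻¹) (-(u^2)⁻¹) u := hasDerivAt_inv hu
    have hpow : HasDerivAt (fun v : ℝ => v ^ 3) (3 * u ^ 2) u := by
      simpa using hasDerivAt_pow 3 u
    have hb : HasDerivAt (fun v : ℝ => (v^3)⁻¹) (-(3*u^2) / (u^3)^2) u :=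
      hpow.inv (pow_ne_zero 3 hu)
    have := ha.sub hb
    refine (this.congr_deriv ?_).congr_of_eventuallyEq ?_
    · field_simp; ring
    · exact Eventually.of_forall fun v => by simp [one_div]
  have h2 : HasDerivAt phiR (-(u * phiR u)) u := by
    have := hasDerivAt_neg_phiR u
    simpa [Pi.neg_def] using this.neg
  have h3 := (h2.mul h1).neg
  refine h3.congr_deriv ?_
  field_simp
  ring

lemma tendsto_G_atTop : Tendsto (fun v => -(phiR v * (1/v - 1/v^3))) atTop (nhds 0) := by
  have h1 : Tendsto (fun v : ℝ => 1/v - 1/v^3) atTop (nhds 0) := by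
    have ha : Tendsto (fun v : ℝ => 1/v) atTop (nhds 0) :=
      tendsto_inv_atTop_zero.congr fun v => (one_div v).symm
    have hb : Tendsto (fun v : ℝ => 1/v^3) atTop (nhds 0) := by
      have h3 : Tendsto (fun v : ℝ => v^3) atTop atTop := tendsto_pow_atTop (by norm_num)
      have := tendsto_inv_atTop_zero.comp h3
      exact this.congr fun v => (one_div (v^3)).symm
    simpa using ha.sub hb
  have := tendsto_phiR_atTop.mul h1
  simpa using this.neg

lemma integrableOn_G' (x : ℝ) (hx : 0 < x) :
    IntegrableOn (fun u => phiR u * (1 - 3/u^4)) (Ioi x) := by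
  refine Integrable.mono' (g := fun u => phiR u * (1 + 3/x^4))
    (integrable_phiR.mul_const _).integrableOn ?_ ?_
  · refine AEStronglyMeasurable.mul ?_ ?_
    · exact continuous_phiR.aestronglyMeasurable.restrict
    · refine (Measurable.aestronglyMeasurable ?_)
      fun_prop
  · refine (ae_restrict_iff' measurableSet_Ioi).mpr (Eventually.of_forall fun u hu => ?_)
    have hux : x < u := hu
    have hu0 : 0 < u := lt_trans hx hux
    have h4 : 0 < u^4 := by positivity
    have hx4 : 0 < x^4 := by positivity
    have hpow4 : x^4 ≤ u^4 := pow_le_pow_left₀ hx.le hux.le 4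
    have hle : (3:ℝ)/u^4 ≤ 3/x^4 := by gcongr
    have := phiR_pos u
    rw [Real.norm_eq_abs, abs_mul, abs_of_pos this]
    have habs : |1 - 3/u^4| ≤ 1 + 3/x^4 := by
      rw [abs_le]
      constructor <;> nlinarith [div_nonneg (by norm_num : (0:ℝ) ≤ 3) h4.le]
    nlinarith

lemma integral_G' (x : ℝ) (hx : 0 < x) :
    ∫ u in Ioi x, phiR u * (1 - 3/u^4) = phiR x * (1/x - 1/x^3) := by
  have := integral_Ioi_of_hasDerivAt_of_tendsto' (f := fun v => -(phiR v * (1/v - 1/v^3)))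
    (f' := fun u => phiR u * (1 - 3/u^4)) (a := x) (m := 0)
    (fun u hu => hasDerivAt_G u (ne_of_gt (lt_of_lt_of_le hx hu)))
    (integrableOn_G' x hx) tendsto_G_atTop
  simpa using this

lemma mills_lower {x : ℝ} (hx : 0 < x) : phiR x * (1/x - 1/x^3) ≤ PsiR x := by
  rw [← integral_G' x hx, PsiR]
  refine setIntegral_mono_on (integrableOn_G' x hx) integrable_phiR.integrableOn
    measurableSet_Ioi fun u hu => ?_
  have hu0 : 0 < u := lt_trans hx hu
  have h4 : 0 < u^4 := by positivity
  have := phiR_pos u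
  nlinarith [div_pos (by norm_num : (0:ℝ) < 3) h4]

lemma mills_lower' {x : ℝ} (hx : 2 ≤ x) : phiR x / (2*x) ≤ PsiR x := by
  have hx0 : (0:ℝ) < x := by linarith
  refine le_trans ?_ (mills_lower hx0)
  have h : (1:ℝ)/(2*x) ≤ 1/x - 1/x^3 := by
    rw [div_sub_div _ _ (ne_of_gt hx0) (by positivity), div_le_div_iff₀ (by positivity) (by positivity)]
    have h2 : (4:ℝ) ≤ x^2 := by nlinarith
    nlinarith [sq_nonneg x, sq_nonneg (x^2)]
  have := phiR_pos x
  calc phiR x / (2*x) = phiR x * (1/(2*x)) := by ring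
    _ ≤ phiR x * (1/x - 1/x^3) := by nlinarith

lemma mills_squeeze : Tendsto (fun x => x * PsiR x / phiR x) atTop (nhds 1) := by
  have hub : ∀ᶠ x in atTop, x * PsiR x / phiR x ≤ 1 := by
    filter_upwards [eventually_gt_atTop (0:ℝ)] with x hx
    have h := mills_upper hx
    have hp := phiR_pos x
    rw [div_le_one hp]
    calc x * PsiR x ≤ x * (phiR x / x) := by nlinarith [PsiR_nonneg x]
      _ = phiR x := by field_simp
  have hlb : ∀ᶠ x in atTop, 1 - 1/x^2 ≤ x * PsiR x / phiR x := by
    filter_upwards [eventually_gt_atTop (0:ℝ)] with x hx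
    have h := mills_lower hx
    have hp := phiR_pos x
    rw [le_div_iff₀ hp]
    have : phiR x * (1 - 1/x^2) = x * (phiR x * (1/x - 1/x^3)) := by
      field_simp
    nlinarith
  have hto : Tendsto (fun x : ℝ => 1 - 1/x^2) atTop (nhds 1) := by
    have hsq : Tendsto (fun x : ℝ => x^2) atTop atTop := tendsto_pow_atTop two_ne_zero
    have h2 : Tendsto (fun x : ℝ => 1/x^2) atTop (nhds 0) :=
      (tendsto_inv_atTop_zero.comp hsq).congr fun v => (one_div (v^2)).symm
    simpa using (tendsto_const_nhds (x := (1:ℝ))).sub h2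
  exact tendsto_of_tendsto_of_tendsto_of_le_of_le' hto tendsto_const_nhds hlb hub

lemma log_phiR (x : ℝ) :
    Real.log (phiR x) = -x^2/2 - Real.log (Real.sqrt (2 * Real.pi)) := by
  have h2π : (0:ℝ) < Real.sqrt (2 * Real.pi) := Real.sqrt_pos.mpr (by positivity)
  rw [phiR, Real.log_mul (by positivity) (Real.exp_ne_zero _), Real.log_inv, Real.log_exp]
  ring

lemma tendsto_linear_sub_log (A B C : ℝ) (hA : 0 < A) :
    Tendsto (fun x : ℝ => A*x - B*Real.log x + C) atTop atTop := by
  have h := Real.isLittleO_log_id_atTop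
  have hc : (0:ℝ) < A / (2 * (|B| + 1)) := by positivity
  have hev := h.def hc
  have hbound : ∀ᶠ x in atTop, A/2 * x + C ≤ A*x - B*Real.log x + C := by
    filter_upwards [hev, eventually_ge_atTop (0:ℝ)] with x hx hx0
    simp only [Real.norm_eq_abs, id] at hx
    rw [abs_of_nonneg hx0] at hx
    have h1 : |B * Real.log x| ≤ A/2 * x := by
      rw [abs_mul]
      set c := A / (2 * (|B| + 1)) with hcdef
      have hB1 : (0:ℝ) < |B| + 1 := by positivity
      have hcB : c * (|B| + 1) = A/2 := by rw [hcdef]; field_simp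
      calc |B| * |Real.log x| ≤ |B| * (c * x) :=
            mul_le_mul_of_nonneg_left hx (abs_nonneg B)
        _ ≤ A/2 * x := by
            rw [← hcB]
            have hc0 : 0 ≤ c := le_of_lt hc
            nlinarith [mul_nonneg hc0 hx0]
    have := abs_le.mp h1
    linarith [this.1, this.2]
  refine tendsto_atTop_mono' _ hbound ?_
  have := (tendsto_id (α := ℝ)).atTop_mul_const (r := A/2) ?_
  · simpa [mul_comm] using (this.atTop_add tendsto_const_nhds)
  · linarith

lemma comp1 {σ ε : ℝ} (hσ : σ ∈ Set.Ioo (0:ℝ) 1) (hε : 0 < ε) :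
    ∀ᶠ x in atTop, PsiR (σ*x + ε) < (PsiR x)^(σ^2) := by
  obtain ⟨hσ0, hσ1⟩ := hσ
  set L1 := Real.log (Real.sqrt (2 * Real.pi)) with hL1
  set K := ε^2/2 + (1-σ^2)*L1 + Real.log σ - σ^2*Real.log 2 with hK
  filter_upwards [eventually_ge_atTop 2, eventually_gt_atTop ((-K)/(σ*ε))] with x hx2 hxK
  have hx0 : (0:ℝ) < x := by linarith
  have hx1 : (1:ℝ) ≤ x := by linarith
  have hσx : 0 < σ*x := mul_pos hσ0 hx0
  have hσxε : 0 < σ*x + ε := by linarith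
  have hKx : -K < x * (σ*ε) := (div_lt_iff₀ (mul_pos hσ0 hε)).mp hxK
  have hσ2 : σ^2 < 1 := by nlinarith
  have h1 : PsiR (σ*x + ε) ≤ phiR (σ*x+ε) / (σ*x+ε) := mills_upper hσxε
  have h2 : phiR (σ*x+ε) / (σ*x+ε) ≤ phiR (σ*x+ε) / (σ*x) := by
    gcongr
    · exact (phiR_pos _).le
    · linarith
  have h2x : (0:ℝ) < 2*x := by linarith
  have h3 : (phiR x/(2*x))^(σ^2) ≤ (PsiR x)^(σ^2) :=
    Real.rpow_le_rpow (div_nonneg (phiR_pos x).le h2x.le) (mills_lower' hx2) (sq_nonneg σ)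
  have h4 : phiR (σ*x+ε) / (σ*x) < (phiR x/(2*x))^(σ^2) := by
    have hlhs : 0 < phiR (σ*x+ε) / (σ*x) := div_pos (phiR_pos _) hσx
    have hrhs : (0:ℝ) < (phiR x/(2*x))^(σ^2) :=
      Real.rpow_pos_of_pos (div_pos (phiR_pos x) h2x) _
    rw [← Real.log_lt_log_iff hlhs hrhs, Real.log_div (phiR_pos _).ne' (ne_of_gt hσx),
      Real.log_rpow (div_pos (phiR_pos x) h2x), Real.log_div (phiR_pos _).ne' (ne_of_gt h2x),
      log_phiR, log_phiR, Real.log_mul (ne_of_gt hσ0) (ne_of_gt hx0),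
      Real.log_mul (by norm_num) (ne_of_gt hx0)]
    have hlog : 0 ≤ Real.log x := Real.log_nonneg hx1
    have hmul : 0 ≤ (1 - σ^2) * Real.log x := mul_nonneg (by linarith) hlog
    rw [hK] at hKx
    nlinarith [hKx, hmul]
  calc PsiR (σ*x + ε) ≤ phiR (σ*x+ε) / (σ*x+ε) := h1
    _ ≤ phiR (σ*x+ε) / (σ*x) := h2
    _ < (phiR x/(2*x))^(σ^2) := h4
    _ ≤ (PsiR x)^(σ^2) := h3

lemma comp2 {σ ε : ℝ} (hσ : σ ∈ Set.Ioo (0:ℝ) 1) (hε : 0 < ε) :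
    ∀ᶠ x in atTop, (PsiR x)^(σ^2) < PsiR (σ*x - ε) := by
  obtain ⟨hσ0, hσ1⟩ := hσ
  set L1 := Real.log (Real.sqrt (2 * Real.pi)) with hL1
  set K := -ε^2/2 - (1-σ^2)*L1 - Real.log 2 - Real.log σ with hK
  have hD := tendsto_linear_sub_log (σ*ε) (1-σ^2) K (by positivity)
  filter_upwards [eventually_ge_atTop 2, eventually_ge_atTop ((2+ε)/σ),
    hD.eventually_gt_atTop 0] with x hx2 hxσ hDx
  have hx0 : (0:ℝ) < x := by linarith
  have hx1 : (1:ℝ) ≤ x := by linarith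
  have hσxε : 2 ≤ σ*x - ε := by
    have := (div_le_iff₀ hσ0).mp hxσ
    linarith
  have hσxε0 : (0:ℝ) < σ*x - ε := by linarith
  have hσx : (0:ℝ) < σ*x := mul_pos hσ0 hx0
  have h1 : (PsiR x)^(σ^2) ≤ (phiR x / x)^(σ^2) :=
    Real.rpow_le_rpow (PsiR_nonneg x) (mills_upper hx0) (sq_nonneg σ)
  have h2 : phiR (σ*x-ε) / (2*(σ*x-ε)) ≤ PsiR (σ*x-ε) := mills_lower' hσxε
  have h2σ : (0:ℝ) < 2*(σ*x-ε) := by linarith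
  have h4 : (phiR x / x)^(σ^2) < phiR (σ*x-ε) / (2*(σ*x-ε)) := by
    have hlhs : (0:ℝ) < (phiR x / x)^(σ^2) :=
      Real.rpow_pos_of_pos (div_pos (phiR_pos x) hx0) _
    have hrhs : (0:ℝ) < phiR (σ*x-ε) / (2*(σ*x-ε)) := div_pos (phiR_pos _) h2σ
    rw [← Real.log_lt_log_iff hlhs hrhs, Real.log_rpow (div_pos (phiR_pos x) hx0),
      Real.log_div (phiR_pos _).ne' (ne_of_gt hx0),
      Real.log_div (phiR_pos _).ne' (ne_of_gt h2σ),
      log_phiR, log_phiR, Real.log_mul (by norm_num) (ne_of_gt hσxε0)]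
    have hlogle : Real.log (σ*x-ε) ≤ Real.log σ + Real.log x := by
      rw [← Real.log_mul (ne_of_gt hσ0) (ne_of_gt hx0)]
      exact Real.log_le_log hσxε0 (by linarith)
    have hDx' : 0 < σ*ε*x - (1-σ^2)*Real.log x + K := hDx
    rw [hK] at hDx'
    nlinarith [hDx', hlogle]
  calc (PsiR x)^(σ^2) ≤ (phiR x / x)^(σ^2) := h1
    _ < phiR (σ*x-ε) / (2*(σ*x-ε)) := h4
    _ ≤ PsiR (σ*x-ε) := h2

lemma comp3 {σ θ : ℝ} (hσ : σ ∈ Set.Ioo (0:ℝ) 1) (hθ0 : 0 < θ) (hθ : θ < σ^2) :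
    ∀ᶠ x in atTop, PsiR (σ*x) < (PsiR x)^θ := by
  obtain ⟨hσ0, hσ1⟩ := hσ
  set L1 := Real.log (Real.sqrt (2 * Real.pi)) with hL1
  set K := (1-θ)*L1 + Real.log σ - θ*Real.log 2 with hK
  filter_upwards [eventually_ge_atTop 2,
    eventually_gt_atTop ((-K) * 2 / (σ^2 - θ))] with x hx2 hxK
  have hx0 : (0:ℝ) < x := by linarith
  have hx1 : (1:ℝ) ≤ x := by linarith
  have hσx : 0 < σ*x := mul_pos hσ0 hx0
  have h2x : (0:ℝ) < 2*x := by linarith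
  have hσ2le : σ^2 ≤ 1 := by nlinarith
  have hθ1 : θ < 1 := by linarith
  have hKx : (-K) * 2 < x * (σ^2 - θ) := (div_lt_iff₀ (by linarith)).mp hxK
  have h1 : PsiR (σ*x) ≤ phiR (σ*x) / (σ*x) := mills_upper hσx
  have h3 : (phiR x/(2*x))^θ ≤ (PsiR x)^θ :=
    Real.rpow_le_rpow (div_nonneg (phiR_pos x).le h2x.le) (mills_lower' hx2) hθ0.le
  have h4 : phiR (σ*x) / (σ*x) < (phiR x/(2*x))^θ := by
    have hlhs : 0 < phiR (σ*x) / (σ*x) := div_pos (phiR_pos _) hσx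
    have hrhs : (0:ℝ) < (phiR x/(2*x))^θ :=
      Real.rpow_pos_of_pos (div_pos (phiR_pos x) h2x) _
    rw [← Real.log_lt_log_iff hlhs hrhs, Real.log_div (phiR_pos _).ne' (ne_of_gt hσx),
      Real.log_rpow (div_pos (phiR_pos x) h2x), Real.log_div (phiR_pos _).ne' (ne_of_gt h2x),
      log_phiR, log_phiR, Real.log_mul (ne_of_gt hσ0) (ne_of_gt hx0),
      Real.log_mul (by norm_num) (ne_of_gt hx0)]
    have hlog : 0 ≤ Real.log x := Real.log_nonneg hx1
    have hmul : 0 ≤ (1 - θ) * Real.log x := by nlinarith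
    have hxx : x ≤ x^2 := by nlinarith
    rw [hK] at hKx
    nlinarith [hKx, hmul, hxx]
  calc PsiR (σ*x) ≤ phiR (σ*x) / (σ*x) := h1
    _ < (phiR x/(2*x))^θ := h4
    _ ≤ (PsiR x)^θ := h3

lemma tendsto_seq_atTop {γ : ℝ} (hγ : 0 < γ) (b : ℕ → ℝ)
    (hb : ∀ᶠ n in atTop, PsiR (b n) = (n:ℝ)^(-γ)) : Tendsto b atTop atTop := by
  rw [tendsto_atTop]
  intro M
  have h0 : Tendsto (fun n : ℕ => (n:ℝ)^(-γ)) atTop (nhds 0) :=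
    (tendsto_rpow_neg_atTop hγ).comp tendsto_natCast_atTop_atTop
  have hlt : ∀ᶠ n : ℕ in atTop, (n:ℝ)^(-γ) < PsiR M := h0.eventually_lt_const (PsiR_pos M)
  filter_upwards [hb, hlt] with n h1 h2
  by_contra h
  push_neg at h
  have h3 : PsiR M ≤ PsiR (b n) := PsiR_anti h.le
  rw [h1] at h3
  linarith

lemma seq_sub_tendsto_zero {ρ : ℝ} (hρ : ρ ∈ Set.Ioo (0:ℝ) 1) (a b : ℕ → ℝ)
    (hb : Tendsto b atTop atTop)
    (hrel : ∀ᶠ n in atTop, PsiR (a n) = (PsiR (b n))^(ρ^2)) :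
    Tendsto (fun n => a n - ρ * b n) atTop (nhds 0) := by
  rw [NormedAddCommGroup.tendsto_nhds_zero]
  intro ε hε
  have h1 := hb.eventually (comp1 hρ hε)
  have h2 := hb.eventually (comp2 hρ hε)
  filter_upwards [hrel, h1, h2] with n h0 hu hl
  rw [← h0] at hu hl
  have ha1 : a n < ρ * b n + ε := by
    by_contra h
    push_neg at h
    have := PsiR_anti h
    linarith
  have ha2 : ρ * b n - ε < a n := by
    by_contra h
    push_neg at h
    have := PsiR_anti h
    linarith
  rw [Real.norm_eq_abs, abs_lt]
  constructor <;> linarith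

lemma seq_sub_tendsto_atBot {ρ θ : ℝ} (hρ : ρ ∈ Set.Ioo (0:ℝ) 1) (hθ0 : 0 < θ)
    (hθ : θ < ρ^2) (a b : ℕ → ℝ) (hb : Tendsto b atTop atTop)
    (hrel : ∀ᶠ n in atTop, PsiR (a n) = (PsiR (b n))^θ) :
    Tendsto (fun n => a n - ρ * b n) atTop atBot := by
  obtain ⟨hρ0, hρ1⟩ := hρ
  set σ := Real.sqrt ((θ + ρ^2)/2) with hσdef
  have hpos : (0:ℝ) < (θ + ρ^2)/2 := by nlinarith [sq_nonneg ρ]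
  have hσsq : σ^2 = (θ + ρ^2)/2 := Real.sq_sqrt hpos.le
  have hσ0 : 0 < σ := Real.sqrt_pos.mpr hpos
  have hσρ : σ < ρ := by
    have h1 : σ^2 < ρ^2 := by rw [hσsq]; linarith
    nlinarith
  have hσ1 : σ < 1 := lt_trans hσρ hρ1
  have hθσ : θ < σ^2 := by rw [hσsq]; linarith
  have h1 := hb.eventually (comp3 ⟨hσ0, hσ1⟩ hθ0 hθσ)
  have hbound : ∀ᶠ n in atTop, a n - ρ * b n ≤ (σ - ρ) * b n := by
    filter_upwards [hrel, h1] with n h0 hc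
    rw [← h0] at hc
    have ha : a n < σ * b n := by
      by_contra h
      push_neg at h
      have := PsiR_anti h
      linarith
    linarith [ha]
  refine tendsto_atBot_mono' atTop hbound ?_
  exact (tendsto_const_mul_atBot_of_neg (by linarith)).mpr hb

/-- the standard normal law as a measure -/
noncomputable def PN : Measure ℝ := volume.withDensity (fun x => ENNReal.ofReal (phiR x))

lemma PN_apply {s : Set ℝ} (hs : MeasurableSet s) :
    PN s = ENNReal.ofReal (∫ u in s, phiR u) := by
  rw [PN, withDensity_apply _ hs]
  rw [← ofReal_integral_eq_lintegral_ofReal integrable_phiR.integrableOn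
    (Eventually.of_forall fun u => (phiR_pos u).le)]

instance : IsProbabilityMeasure PN :=
  ⟨by rw [PN_apply MeasurableSet.univ]; simp [setIntegral_univ, integral_phiR]⟩

lemma PN_Ioi (t : ℝ) : PN (Ioi t) = ENNReal.ofReal (PsiR t) := PN_apply measurableSet_Ioi

lemma map_eq_PN {Ω : Type*} [MeasurableSpace Ω] (μ : Measure Ω) [IsProbabilityMeasure μ]
    (Z : Ω → ℝ) (hm : Measurable Z)
    (hZ : ∀ x : ℝ, (μ {a | Z a ≤ x}).toReal = stdNormalCDF x) :
    μ.map Z = PN := by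
  have : IsProbabilityMeasure (μ.map Z) := Measure.isProbabilityMeasure_map hm.aemeasurable
  refine Measure.ext_of_Iic (μ.map Z) PN fun x => ?_
  rw [Measure.map_apply hm measurableSet_Iic, PN_apply measurableSet_Iic]
  have h1 : Z ⁻¹' Iic x = {a | Z a ≤ x} := rfl
  rw [h1, ← ENNReal.ofReal_toReal (measure_ne_top μ _), hZ x, stdNormalCDF_eq]

lemma integrable_kernel (b ρ c : ℝ) :
    Integrable (fun z => phiR z * PsiR ((b - ρ*z)/c)) := by
  have hmeas : Measurable fun z => phiR z * PsiR ((b - ρ*z)/c) :=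
    continuous_phiR.measurable.mul
      (measurable_PsiR.comp ((measurable_const.sub (measurable_id.const_mul ρ)).div_const c))
  refine Integrable.mono' integrable_phiR hmeas.aestronglyMeasurable
    (Eventually.of_forall fun z => ?_)
  have h1 := phiR_pos z
  have h2 := PsiR_nonneg ((b - ρ*z)/c)
  have h3 := PsiR_le_one ((b - ρ*z)/c)
  rw [Real.norm_eq_abs, abs_of_nonneg (by positivity)]
  nlinarith

theorem key_identity {Ω : Type*} [MeasurableSpace Ω] (μ : Measure Ω) [IsProbabilityMeasure μ]
    (Z₁ Z₂ : Ω → ℝ) (hm₁ : Measurable Z₁) (hm₂ : Measurable Z₂)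
    (hind : IndepFun Z₁ Z₂ μ)
    (hZ₁ : ∀ x : ℝ, (μ {a | Z₁ a ≤ x}).toReal = stdNormalCDF x)
    (hZ₂ : ∀ x : ℝ, (μ {a | Z₂ a ≤ x}).toReal = stdNormalCDF x)
    (ρ c : ℝ) (hc : 0 < c) (a b : ℝ) :
    (μ {ω | Z₁ ω > a ∧ ρ * Z₁ ω + c * Z₂ ω > b}).toReal
      = ∫ z in Ioi a, phiR z * PsiR ((b - ρ*z)/c) := by
  set S : Set (ℝ × ℝ) := {p : ℝ × ℝ | a < p.1 ∧ b < ρ*p.1 + c*p.2} with hSdef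
  have hS : MeasurableSet S := by
    apply MeasurableSet.inter
    · exact measurableSet_lt measurable_const measurable_fst
    · exact measurableSet_lt measurable_const
        ((measurable_fst.const_mul ρ).add (measurable_snd.const_mul c))
  have hpre : {ω | Z₁ ω > a ∧ ρ * Z₁ ω + c * Z₂ ω > b}
      = (fun ω => (Z₁ ω, Z₂ ω)) ⁻¹' S := rfl
  have hmap : μ.map (fun ω => (Z₁ ω, Z₂ ω)) = PN.prod PN := by
    rw [(indepFun_iff_map_prod_eq_prod_map_map hm₁.aemeasurable hm₂.aemeasurable).mp hind,
      map_eq_PN μ Z₁ hm₁ hZ₁, map_eq_PN μ Z₂ hm₂ hZ₂]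
  have h1 : μ {ω | Z₁ ω > a ∧ ρ * Z₁ ω + c * Z₂ ω > b} = (PN.prod PN) S := by
    rw [hpre, ← Measure.map_apply (hm₁.prodMk hm₂) hS, hmap]
  have hsec : ∀ x : ℝ, PN (Prod.mk x ⁻¹' S)
      = (Ioi a).indicator (fun x => ENNReal.ofReal (PsiR ((b - ρ*x)/c))) x := by
    intro x
    by_cases hax : a < x
    · have hset : Prod.mk x ⁻¹' S = Ioi ((b - ρ*x)/c) := by
        ext y
        simp only [mem_preimage, hSdef, mem_setOf_eq, mem_Ioi, hax, true_and]
        rw [div_lt_iff₀ hc]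
        constructor <;> intro h <;> nlinarith
      rw [hset, PN_Ioi]
      exact (indicator_of_mem (show x ∈ Ioi a from hax)
        (fun x => ENNReal.ofReal (PsiR ((b - ρ*x)/c)))).symm
    · have hset : Prod.mk x ⁻¹' S = ∅ := by
        ext y
        simp only [mem_preimage, hSdef, mem_setOf_eq, mem_empty_iff_false, iff_false]
        tauto
      rw [hset]
      simp [indicator_of_notMem (show x ∉ Ioi a from hax)]
  have h2 : (PN.prod PN) S = ∫⁻ x in Ioi a, ENNReal.ofReal (PsiR ((b - ρ*x)/c)) ∂PN := by
    rw [Measure.prod_apply hS]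
    rw [lintegral_congr hsec]
    exact lintegral_indicator measurableSet_Ioi _
  have hmeasg : Measurable fun x : ℝ => ENNReal.ofReal (PsiR ((b - ρ*x)/c)) :=
    (measurable_PsiR.comp ((measurable_const.sub (measurable_id.const_mul ρ)).div_const c)).ennreal_ofReal
  have h3 : ∫⁻ x in Ioi a, ENNReal.ofReal (PsiR ((b - ρ*x)/c)) ∂PN
      = ∫⁻ x in Ioi a, ENNReal.ofReal (phiR x * PsiR ((b - ρ*x)/c)) := by
    rw [PN, restrict_withDensity measurableSet_Ioi,
      lintegral_withDensity_eq_lintegral_mul _ (continuous_phiR.measurable.ennreal_ofReal) hmeasg]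
    refine lintegral_congr fun x => ?_
    simp only [Pi.mul_apply]
    rw [← ENNReal.ofReal_mul (phiR_pos x).le]
  have h4 : ∫⁻ x in Ioi a, ENNReal.ofReal (phiR x * PsiR ((b - ρ*x)/c))
      = ENNReal.ofReal (∫ x in Ioi a, phiR x * PsiR ((b - ρ*x)/c)) := by
    rw [← ofReal_integral_eq_lintegral_ofReal (integrable_kernel b ρ c).integrableOn
      (Eventually.of_forall fun x => mul_nonneg (phiR_pos x).le (PsiR_nonneg _))]
  rw [h1, h2, h3, h4, ENNReal.toReal_ofReal]
  exact setIntegral_nonneg measurableSet_Ioi fun x _ => mul_nonneg (phiR_pos x).le (PsiR_nonneg _)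

lemma phiR_swap {ρ c : ℝ} (h : ρ^2 + c^2 = 1) (B u : ℝ) :
    phiR (ρ*B + c*u) * phiR (c*B - ρ*u) = phiR B * phiR u := by
  unfold phiR
  have hexp : Real.exp (-(ρ*B+c*u)^2/2) * Real.exp (-(c*B-ρ*u)^2/2)
      = Real.exp (-B^2/2) * Real.exp (-u^2/2) := by
    rw [← Real.exp_add, ← Real.exp_add]
    congr 1
    linear_combination (-(B^2+u^2)/2) * h
  linear_combination ((Real.sqrt (2*Real.pi))⁻¹ * (Real.sqrt (2*Real.pi))⁻¹) * hexp

/-- change of variables z = ρB + c u on the half-line -/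
lemma subst_lemma {ρ c : ℝ} (hc : 0 < c) (hc2 : c^2 = 1 - ρ^2) (A B : ℝ) :
    ∫ z in Ioi A, phiR z * PsiR ((B - ρ*z)/c)
      = c * ∫ u in Ioi ((A - ρ*B)/c), phiR (ρ*B + c*u) * PsiR (c*B - ρ*u) := by
  set f : ℝ → ℝ := fun z => phiR z * PsiR ((B - ρ*z)/c) with hf
  have harg : ∀ u : ℝ, (B - ρ*(c*u + ρ*B))/c = c*B - ρ*u := by
    intro u
    field_simp
    linear_combination (-B) * hc2
  have h1 : ∀ u : ℝ, f (c*u + ρ*B) = phiR (ρ*B + c*u) * PsiR (c*B - ρ*u) := by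
    intro u
    rw [hf]
    simp only
    rw [harg u, show c*u + ρ*B = ρ*B + c*u from by ring]
  have h2 : ∫ u in Ioi ((A - ρ*B)/c), phiR (ρ*B + c*u) * PsiR (c*B - ρ*u)
      = ∫ u in Ioi ((A - ρ*B)/c), (fun x => f (x + ρ*B)) (c*u) := by
    refine setIntegral_congr_fun measurableSet_Ioi fun u _ => ?_
    simp only
    rw [← h1 u]
  have h3 := integral_comp_mul_left_Ioi (fun x => f (x + ρ*B)) ((A - ρ*B)/c) hc
  have hca : c * ((A - ρ*B)/c) = A - ρ*B := by field_simp
  rw [hca] at h3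
  have h4 : ∫ x in Ioi (A - ρ*B), f (x + ρ*B) = ∫ z in Ioi A, f z := by
    rw [← integral_indicator measurableSet_Ioi, ← integral_indicator measurableSet_Ioi]
    have : ∀ x : ℝ, (Ioi (A - ρ*B)).indicator (fun x => f (x + ρ*B)) x
        = (Ioi A).indicator f (x + ρ*B) := by
      intro x
      by_cases hx : x ∈ Ioi (A - ρ*B)
      · rw [indicator_of_mem hx, indicator_of_mem (by simpa [mem_Ioi] using by linarith [hx.out] : x + ρ*B ∈ Ioi A)]
      · rw [indicator_of_notMem hx, indicator_of_notMem]
        simp only [mem_Ioi, not_lt] at hx ⊢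
        linarith
    rw [integral_congr_ae (Eventually.of_forall this)]
    exact integral_add_right_eq_self ((Ioi A).indicator f) (ρ*B)
  rw [h2, h3, h4, smul_eq_mul]
  field_simp

lemma tendsto_gratio {ρ c : ℝ} (hρ0 : 0 < ρ) (hc0 : 0 < c) (hc2 : ρ^2 + c^2 = 1)
    (b : ℕ → ℝ) (hb : Tendsto b atTop atTop) (u : ℝ) :
    Tendsto (fun n => c * (phiR (ρ*b n + c*u) * PsiR (c*b n - ρ*u)) / PsiR (b n))
      atTop (nhds (phiR u)) := by
  have hcb : Tendsto (fun n => c*b n - ρ*u) atTop atTop := by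
    have h := tendsto_atTop_add_const_right atTop (-(ρ*u))
      ((tendsto_const_mul_atTop_of_pos hc0).mpr hb)
    exact h.congr fun n => by ring
  have hT1 : Tendsto (fun n => phiR (b n) / (b n * PsiR (b n))) atTop (nhds 1) := by
    have h := (mills_squeeze.comp hb).inv₀ one_ne_zero
    simpa [inv_div] using h
  have hT2 : Tendsto (fun n => (c*b n - ρ*u) * PsiR (c*b n - ρ*u) / phiR (c*b n - ρ*u))
      atTop (nhds 1) := mills_squeeze.comp hcb
  have hT3 : Tendsto (fun n => c*b n / (c*b n - ρ*u)) atTop (nhds 1) := by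
    have h0 : Tendsto (fun n => (ρ*u) * (c*b n - ρ*u)⁻¹) atTop (nhds 0) := by
      have := (tendsto_inv_atTop_zero.comp hcb).const_mul (ρ*u)
      simpa using this
    have h1 : Tendsto (fun n => 1 + (ρ*u) * (c*b n - ρ*u)⁻¹) atTop (nhds 1) := by
      simpa using tendsto_const_nhds.add h0
    refine h1.congr' ?_
    filter_upwards [hcb.eventually (eventually_gt_atTop 0)] with n hn
    field_simp; ring
  have hprod := ((tendsto_const_nhds (x := phiR u)).mul hT1).mul hT2 |>.mul hT3
  have hprod' : Tendsto (fun n => phiR u * (phiR (b n)/(b n * PsiR (b n)))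
      * ((c*b n - ρ*u) * PsiR (c*b n - ρ*u) / phiR (c*b n - ρ*u))
      * (c*b n / (c*b n - ρ*u))) atTop (nhds (phiR u)) := by
    simpa using hprod
  refine Tendsto.congr' ?_ hprod'
  filter_upwards [hb.eventually (eventually_gt_atTop 0),
    hcb.eventually (eventually_gt_atTop 0)] with n hbn hcbn
  have hswap := phiR_swap hc2 (b n) u
  have hphi : phiR (ρ*b n + c*u) = phiR (b n) * phiR u / phiR (c*b n - ρ*u) := by
    rw [eq_div_iff (phiR_pos _).ne']
    exact hswap
  rw [hphi]
  have h1 := (phiR_pos (b n)).ne'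
  have h2 := (phiR_pos (c*b n - ρ*u)).ne'
  have h3 := (PsiR_pos (b n)).ne'; have h4 := hcbn.ne'; have h5 := hbn.ne'
  field_simp
  have h6 : b n * c - ρ * u ≠ 0 := by rw [mul_comm]; exact h4
  rw [mul_right_comm (phiR u), mul_comm (b n * c - ρ * u), mul_div_mul_right _ _ h6]

lemma gratio_bound {ρ c : ℝ} (hρ0 : 0 < ρ) (hc0 : 0 < c) (hc2 : ρ^2 + c^2 = 1)
    {B : ℝ} (hB : 2 ≤ B) (u : ℝ) :
    c * (phiR (ρ*B + c*u) * PsiR (c*B - ρ*u)) / PsiR B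
      ≤ 4 * phiR u + 4*ρ*(|u| * Real.exp (-(c^2/2) * u^2)) := by
  have hB0 : 0 < B := by linarith
  have hΨB : phiR B / (2*B) ≤ PsiR B := mills_lower' hB
  have hΨBpos := PsiR_pos B
  have hφB := phiR_pos B
  have hφ1 := phiR_pos (ρ*B + c*u)
  have hφx := phiR_pos (c*B - ρ*u)
  have hden : (0:ℝ) < phiR B / (2*B) := by positivity
  by_cases hcase : u ≤ c*B/(2*ρ)
  · have h2ρu : u * (2*ρ) ≤ c*B := (le_div_iff₀ (by positivity)).mp hcase
    have hx : c*B/2 ≤ c*B - ρ*u := by nlinarith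
    have hxpos : (0:ℝ) < c*B - ρ*u := by
      have : (0:ℝ) < c*B/2 := by positivity
      linarith
    have h1 : PsiR (c*B - ρ*u) ≤ phiR (c*B - ρ*u) / (c*B/2) := by
      refine (mills_upper hxpos).trans ?_
      gcongr
    have hnum : c * (phiR (ρ*B + c*u) * PsiR (c*B - ρ*u))
        ≤ c * (phiR (ρ*B+c*u) * (phiR (c*B-ρ*u) / (c*B/2))) := by
      have := PsiR_nonneg (c*B - ρ*u)
      apply mul_le_mul_of_nonneg_left _ hc0.le
      exact mul_le_mul_of_nonneg_left h1 hφ1.le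
    have hnum0 : 0 ≤ c * (phiR (ρ*B+c*u) * (phiR (c*B-ρ*u) / (c*B/2))) := by positivity
    calc c * (phiR (ρ*B + c*u) * PsiR (c*B - ρ*u)) / PsiR B
        ≤ c * (phiR (ρ*B+c*u) * (phiR (c*B-ρ*u) / (c*B/2))) / (phiR B / (2*B)) :=
          div_le_div₀ hnum0 hnum hden hΨB
      _ = 4 * (phiR (ρ*B+c*u) * phiR (c*B-ρ*u)) / phiR B := by
          field_simp
          ring
      _ = 4 * phiR u := by
          rw [phiR_swap hc2]
          field_simp
      _ ≤ 4 * phiR u + 4*ρ*(|u| * Real.exp (-(c^2/2) * u^2)) := by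
          have h0 : (0:ℝ) ≤ 4*ρ*(|u| * Real.exp (-(c^2/2) * u^2)) :=
            mul_nonneg (by linarith) (mul_nonneg (abs_nonneg u) (Real.exp_pos _).le)
          linarith
  · push_neg at hcase
    have hu0 : 0 < u := lt_trans (by positivity) hcase
    have h2ρu : c*B < u * (2*ρ) := (div_lt_iff₀ (by positivity)).mp hcase
    have hΨx : PsiR (c*B - ρ*u) ≤ 1 := PsiR_le_one _
    have hφφ : phiR (ρ*B + c*u) ≤ phiR B * Real.exp (-(c^2/2)*u^2) := by
      unfold phiR
      rw [mul_assoc, ← Real.exp_add]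
      apply mul_le_mul_of_nonneg_left _ (by positivity)
      apply Real.exp_le_exp.mpr
      nlinarith [mul_pos hc0 hB0, mul_pos (mul_pos hc0 hB0) hu0]
    have hnum : c * (phiR (ρ*B + c*u) * PsiR (c*B - ρ*u)) ≤ c * (phiR (ρ*B+c*u) * 1) := by
      apply mul_le_mul_of_nonneg_left _ hc0.le
      exact mul_le_mul_of_nonneg_left hΨx hφ1.le
    calc c * (phiR (ρ*B + c*u) * PsiR (c*B - ρ*u)) / PsiR B
        ≤ c * (phiR (ρ*B+c*u) * 1) / (phiR B / (2*B)) :=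
          div_le_div₀ (by positivity) hnum hden hΨB
      _ = 2*c*B * phiR (ρ*B+c*u) / phiR B := by
          field_simp
      _ ≤ 2*c*B * (phiR B * Real.exp (-(c^2/2)*u^2)) / phiR B := by
          gcongr
      _ = 2*c*B * Real.exp (-(c^2/2)*u^2) := by
          field_simp
      _ ≤ 4*ρ*(|u| * Real.exp (-(c^2/2) * u^2)) := by
          rw [abs_of_pos hu0]
          have he := (Real.exp_pos (-(c^2/2) * u^2)).le
          nlinarith
      _ ≤ 4 * phiR u + 4*ρ*(|u| * Real.exp (-(c^2/2) * u^2)) := by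
          nlinarith [phiR_pos u]


lemma phiR_neg (x : ℝ) : phiR (-x) = phiR x := by unfold phiR; rw [neg_pow]; ring_nf

lemma PsiR_zero : PsiR 0 = 1/2 := by
  have h1 : ∫ x in Ioi (0:ℝ), phiR (-x) = ∫ x in Iic (-(0:ℝ)), phiR x :=
    integral_comp_neg_Ioi 0 phiR
  rw [neg_zero] at h1
  have h2 : PsiR 0 = ∫ x in Iic (0:ℝ), phiR x := by
    rw [PsiR, ← h1]
    exact setIntegral_congr_fun measurableSet_Ioi fun x _ => (phiR_neg x).symm
  have h3 := integral_add_compl (μ := volume) (measurableSet_Iic (a := (0:ℝ))) integrable_phiR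
  rw [compl_Iic, integral_phiR] at h3
  rw [PsiR] at h2 ⊢
  linarith

lemma integrable_bound (ρ c : ℝ) (hc0 : 0 < c) :
    Integrable (fun u => 4 * phiR u + 4*ρ*(|u| * Real.exp (-(c^2/2) * u^2))) := by
  refine (integrable_phiR.const_mul 4).add ?_
  have hbase : Integrable (fun x : ℝ => x ^ (1:ℝ) * Real.exp (-(c^2/2) * x ^ 2)) :=
    integrable_rpow_mul_exp_neg_mul_sq (by positivity) (by norm_num)
  have h2 : Integrable (fun x : ℝ => x * Real.exp (-(c^2/2) * x ^ 2)) :=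
    hbase.congr (Eventually.of_forall fun x => by simp [Real.rpow_one])
  have h3 := h2.abs
  have h4 : Integrable (fun x : ℝ => |x| * Real.exp (-(c^2/2) * x ^ 2)) := by
    refine h3.congr (Eventually.of_forall fun x => ?_)
    simp only [abs_mul, abs_of_pos (Real.exp_pos _)]
  exact h4.const_mul (4*ρ)

lemma dct_main {ρ c : ℝ} (hρ0 : 0 < ρ) (hc0 : 0 < c) (hc2 : ρ^2 + c^2 = 1)
    (b t : ℕ → ℝ) (hb : Tendsto b atTop atTop)
    (S : Set ℝ) (hS : MeasurableSet S)
    (hiff : ∀ᵐ u : ℝ, ∀ᶠ n in atTop, (u ∈ Ioi (t n) ↔ u ∈ S)) :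
    Tendsto (fun n => ∫ u, (Ioi (t n)).indicator
        (fun u => c * (phiR (ρ*b n + c*u) * PsiR (c*b n - ρ*u)) / PsiR (b n)) u)
      atTop (nhds (∫ u in S, phiR u)) := by
  obtain ⟨N, hN⟩ := eventually_atTop.mp (hb.eventually (eventually_ge_atTop 2))
  set F : ℕ → ℝ → ℝ := fun n u => (Ioi (t n)).indicator
    (fun u => c * (phiR (ρ*b n + c*u) * PsiR (c*b n - ρ*u)) / PsiR (b n)) u with hF
  have hval_nonneg : ∀ n u, 0 ≤ c * (phiR (ρ*b n + c*u) * PsiR (c*b n - ρ*u)) / PsiR (b n) :=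
    fun n u => div_nonneg (mul_nonneg hc0.le (mul_nonneg (phiR_pos _).le (PsiR_nonneg _)))
      (PsiR_nonneg _)
  have hbound_nonneg : ∀ u : ℝ, 0 ≤ 4 * phiR u + 4*ρ*(|u| * Real.exp (-(c^2/2) * u^2)) := by
    intro u
    have h1 := (phiR_pos u).le
    have h2 : (0:ℝ) ≤ 4*ρ*(|u| * Real.exp (-(c^2/2) * u^2)) :=
      mul_nonneg (by linarith) (mul_nonneg (abs_nonneg u) (Real.exp_pos _).le)
    linarith
  have hDCT : Tendsto (fun n => ∫ u, F (n + N) u) atTop (nhds (∫ u, S.indicator phiR u)) := by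
    refine tendsto_integral_of_dominated_convergence
      (fun u => 4 * phiR u + 4*ρ*(|u| * Real.exp (-(c^2/2) * u^2)))
      (fun n => ?_) (integrable_bound ρ c hc0) (fun n => ?_) ?_
    · -- measurability
      refine (Measurable.indicator ?_ measurableSet_Ioi).aestronglyMeasurable
      have hm1 : Measurable fun u : ℝ => phiR (ρ*b (n+N) + c*u) :=
        continuous_phiR.measurable.comp ((measurable_id.const_mul c).const_add _)
      have hm2 : Measurable fun u : ℝ => PsiR (c*b (n+N) - ρ*u) :=
        measurable_PsiR.comp (measurable_const.sub (measurable_id.const_mul ρ))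
      exact ((hm1.mul hm2).const_mul c).div_const _
    · -- bound
      refine Eventually.of_forall fun u => ?_
      have hB2 : 2 ≤ b (n + N) := hN (n+N) (Nat.le_add_left N n)
      by_cases hu : u ∈ Ioi (t (n+N))
      · rw [hF]
        simp only [indicator_of_mem hu]
        rw [Real.norm_eq_abs, abs_of_nonneg (hval_nonneg _ _)]
        exact gratio_bound hρ0 hc0 hc2 hB2 u
      · rw [hF]
        simp only [indicator_of_notMem hu]
        rw [norm_zero]
        exact hbound_nonneg u
    · -- pointwise limit
      filter_upwards [hiff] with u hu
      have hg := tendsto_gratio hρ0 hc0 hc2 b hb u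
      by_cases huS : u ∈ S
      · have hev : ∀ᶠ n in atTop, F n u
            = c * (phiR (ρ*b n + c*u) * PsiR (c*b n - ρ*u)) / PsiR (b n) := by
          filter_upwards [hu] with n hn
          rw [hF]
          simp only [indicator_of_mem (hn.mpr huS)]
        have h1 : Tendsto (fun n => F n u) atTop (nhds (phiR u)) :=
          Tendsto.congr' (EventuallyEq.symm hev) hg
        have h2 : S.indicator phiR u = phiR u := indicator_of_mem huS _
        rw [h2]
        exact h1.comp (tendsto_add_atTop_nat N)
      · have hev : ∀ᶠ n in atTop, F n u = 0 := by
          filter_upwards [hu] with n hn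
          rw [hF]
          simp only [indicator_of_notMem (fun hmem => huS (hn.mp hmem))]
        have h1 : Tendsto (fun n => F n u) atTop (nhds 0) :=
          Tendsto.congr' (EventuallyEq.symm hev) tendsto_const_nhds
        have h2 : S.indicator phiR u = 0 := indicator_of_notMem huS _
        rw [h2]
        exact h1.comp (tendsto_add_atTop_nat N)
  rw [← integral_indicator hS]
  exact (tendsto_add_atTop_iff_nat N).mp hDCT

end Helpers

open Set in
/-- bivariate normal, boundary regime: with `X = Z₁`,
`Y = ρZ₁ + √(1-ρ²)Z₂` bivariate standard normal with correlation `ρ ∈ (0,1)` and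
`Φ(x_β(n)) = 1 - n^{-β}`, `Φ(x_γ(n)) = 1 - n^{-γ}`: if `β < ρ²γ` then
`P(X > x_β(n), Y > x_γ(n))/n^{-γ} → 1`; if `β = ρ²γ` then the ratio tends to `1/2`. -/
theorem bivariate_normal_boundary_regime
    {Ω : Type*} [MeasurableSpace Ω] (μ : Measure Ω) [IsProbabilityMeasure μ]
    (Z₁ Z₂ : Ω → ℝ) (hm₁ : Measurable Z₁) (hm₂ : Measurable Z₂)
    (hind : IndepFun Z₁ Z₂ μ)
    (hZ₁ : ∀ x : ℝ, (μ {a | Z₁ a ≤ x}).toReal = stdNormalCDF x)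
    (hZ₂ : ∀ x : ℝ, (μ {a | Z₂ a ≤ x}).toReal = stdNormalCDF x)
    (ρ : ℝ) (hρ : ρ ∈ Set.Ioo (0:ℝ) 1)
    (β γ : ℝ) (hβ : 0 < β) (hγ : 0 < γ)
    (xβ xγ : ℕ → ℝ)
    (hxβ : ∀ n : ℕ, 2 ≤ n → stdNormalCDF (xβ n) = 1 - (n : ℝ) ^ (-β))
    (hxγ : ∀ n : ℕ, 2 ≤ n → stdNormalCDF (xγ n) = 1 - (n : ℝ) ^ (-γ)) :
    (β < ρ ^ 2 * γ →
      Tendsto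
        (fun n : ℕ =>
          (μ {a | Z₁ a > xβ n ∧
            ρ * Z₁ a + Real.sqrt (1 - ρ ^ 2) * Z₂ a > xγ n}).toReal / (n : ℝ) ^ (-γ))
        atTop (nhds 1)) ∧
    (β = ρ ^ 2 * γ →
      Tendsto
        (fun n : ℕ =>
          (μ {a | Z₁ a > xβ n ∧
            ρ * Z₁ a + Real.sqrt (1 - ρ ^ 2) * Z₂ a > xγ n}).toReal / (n : ℝ) ^ (-γ))
        atTop (nhds (1 / 2))) := by
  obtain ⟨hρ0, hρ1⟩ := hρ
  have h1ρ : (0:ℝ) < 1 - ρ^2 := by nlinarith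
  set c := Real.sqrt (1 - ρ^2) with hcdef
  have hc2' : c^2 = 1 - ρ^2 := Real.sq_sqrt h1ρ.le
  have hc0 : 0 < c := Real.sqrt_pos.mpr h1ρ
  have hc2 : ρ^2 + c^2 = 1 := by rw [hc2']; ring
  have hPsiβ : ∀ᶠ n : ℕ in atTop, PsiR (xβ n) = (n:ℝ)^(-β) := by
    filter_upwards [eventually_ge_atTop 2] with n hn
    have h := hxβ n hn
    have h2 := stdNormalCDF_add_PsiR (xβ n)
    linarith
  have hPsiγ : ∀ᶠ n : ℕ in atTop, PsiR (xγ n) = (n:ℝ)^(-γ) := by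
    filter_upwards [eventually_ge_atTop 2] with n hn
    have h := hxγ n hn
    have h2 := stdNormalCDF_add_PsiR (xγ n)
    linarith
  have hbtop : Tendsto xγ atTop atTop := tendsto_seq_atTop hγ xγ hPsiγ
  have hFeq : ∀ᶠ n : ℕ in atTop,
      (μ {a | Z₁ a > xβ n ∧ ρ * Z₁ a + c * Z₂ a > xγ n}).toReal / (n : ℝ) ^ (-γ)
      = ∫ u, (Ioi ((xβ n - ρ * xγ n)/c)).indicator
          (fun u => c * (phiR (ρ*xγ n + c*u) * PsiR (c*xγ n - ρ*u)) / PsiR (xγ n)) u := by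
    filter_upwards [hPsiγ] with n hΨ
    rw [key_identity μ Z₁ Z₂ hm₁ hm₂ hind hZ₁ hZ₂ ρ c hc0 (xβ n) (xγ n),
      subst_lemma hc0 hc2' (xβ n) (xγ n), ← hΨ, integral_indicator measurableSet_Ioi]
    have h5 : ∫ (u : ℝ) in Ioi ((xβ n - ρ * xγ n)/c),
        c * (phiR (ρ*xγ n + c*u) * PsiR (c*xγ n - ρ*u)) / PsiR (xγ n)
        = (c / PsiR (xγ n)) * ∫ u in Ioi ((xβ n - ρ * xγ n)/c),
            phiR (ρ*xγ n + c*u) * PsiR (c*xγ n - ρ*u) := by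
      rw [← integral_const_mul]
      exact setIntegral_congr_fun measurableSet_Ioi fun u _ => by ring
    rw [h5]
    ring
  constructor
  · -- case β < ρ²γ
    intro hlt
    have hθ0 : 0 < β/γ := div_pos hβ hγ
    have hθρ : β/γ < ρ^2 := (div_lt_iff₀ hγ).mpr (by linarith)
    have hrel : ∀ᶠ n : ℕ in atTop, PsiR (xβ n) = (PsiR (xγ n))^(β/γ) := by
      filter_upwards [hPsiβ, hPsiγ] with n h1 h2
      rw [h1, h2, ← Real.rpow_mul (Nat.cast_nonneg n)]
      congr 1
      field_simp
    have hsub := seq_sub_tendsto_atBot ⟨hρ0, hρ1⟩ hθ0 hθρ xβ xγ hbtop hrel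
    have ht : Tendsto (fun n => (xβ n - ρ * xγ n)/c) atTop atBot :=
      (tendsto_div_const_atBot_of_pos hc0).mpr hsub
    have hiff : ∀ᵐ u : ℝ, ∀ᶠ n in atTop,
        (u ∈ Ioi ((xβ n - ρ * xγ n)/c) ↔ u ∈ (univ : Set ℝ)) := by
      refine Eventually.of_forall fun u => ?_
      filter_upwards [ht.eventually (eventually_lt_atBot u)] with n hn
      simp only [mem_Ioi, mem_univ, iff_true]
      exact hn
    have hmain := dct_main hρ0 hc0 hc2 xγ (fun n => (xβ n - ρ * xγ n)/c) hbtop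
      univ MeasurableSet.univ hiff
    have huniv : ∫ u in (univ : Set ℝ), phiR u = 1 := by
      rw [setIntegral_univ]; exact integral_phiR
    rw [huniv] at hmain
    exact Tendsto.congr' (EventuallyEq.symm hFeq) hmain
  · -- case β = ρ²γ
    intro heq
    have hrel : ∀ᶠ n : ℕ in atTop, PsiR (xβ n) = (PsiR (xγ n))^(ρ^2) := by
      filter_upwards [hPsiβ, hPsiγ] with n h1 h2
      rw [h1, h2, ← Real.rpow_mul (Nat.cast_nonneg n)]
      congr 1
      rw [heq]; ring
    have hsub := seq_sub_tendsto_zero ⟨hρ0, hρ1⟩ xβ xγ hbtop hrel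
    have ht : Tendsto (fun n => (xβ n - ρ * xγ n)/c) atTop (nhds 0) := by
      have := hsub.div_const c
      simpa using this
    have h0ae : ∀ᵐ u : ℝ, u ≠ 0 := by
      refine ae_iff.mpr ?_
      have hset : {a : ℝ | ¬ a ≠ 0} = {0} := by ext u; simp
      rw [hset]
      exact measure_singleton 0
    have hiff : ∀ᵐ u : ℝ, ∀ᶠ n in atTop,
        (u ∈ Ioi ((xβ n - ρ * xγ n)/c) ↔ u ∈ Ioi (0:ℝ)) := by
      filter_upwards [h0ae] with u hu
      rcases hu.lt_or_gt with hneg | hpos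
      · filter_upwards [ht.eventually_const_lt hneg] with n hn
        simp only [mem_Ioi]
        constructor <;> intro h <;> linarith
      · filter_upwards [ht.eventually_lt_const hpos] with n hn
        simp only [mem_Ioi]
        constructor <;> intro h <;> linarith
    have hmain := dct_main hρ0 hc0 hc2 xγ (fun n => (xβ n - ρ * xγ n)/c) hbtop
      (Ioi 0) measurableSet_Ioi hiff
    have hhalf : ∫ u in Ioi (0:ℝ), phiR u = 1/2 := PsiR_zero
    rw [hhalf] at hmain
    exact Tendsto.congr' (EventuallyEq.symm hFeq) hmain
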